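/- Let r ≥ 2. If G is a finite simple graph on n vertices containing no subgraph isomorphic to K_{r+1}, then q(G) ≤ 2·(1 − 1/r)·n, where q(G) is the signless Laplacian spectral radius of G. -/

import Mathlib

/-- `G` contains a copy of `H` as a subgraph,
i.e. a subgraph isomorphic to `H`. -/
def HasSubgraphCopy {α β : Type*} (H : SimpleGraph α) (G : SimpleGraph β) : Prop :=
  ∃ f : H →g G, Function.Injective f

lemma adjMatrix_isHermitian {n : ℕ} (G : SimpleGraph (Fin n)) [DecidableRel G.Adj] :
    (G.adjMatrix ℝ).IsHermitian := by
  show Matrix.conjTranspose (G.adjMatrix ℝ) = G.adjMatrix ℝ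
  ext i j
  simp only [Matrix.conjTranspose_apply, SimpleGraph.adjMatrix_apply, star_trivial]
  by_cases h : G.Adj i j
  · simp [h, h.symm]
  · have h' : ¬ G.Adj j i := fun hji => h hji.symm
    simp [h, h']

/-- the adjacency spectral radius of `G`: the largest eigenvalue of the
(real symmetric) adjacency matrix of `G` -/
noncomputable def adjSpectralRadius {n : ℕ} (G : SimpleGraph (Fin n)) : ℝ :=
  letI := Classical.decRel G.Adj
  ⨆ i, (adjMatrix_isHermitian G).eigenvalues i

lemma signlessLap_isHermitian {n : ℕ} (G : SimpleGraph (Fin n)) [DecidableRel G.Adj] :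
    (Matrix.diagonal (fun v => (G.degree v : ℝ)) + G.adjMatrix ℝ).IsHermitian :=
  (Matrix.isHermitian_diagonal _).add (adjMatrix_isHermitian G)

/-- the signless Laplacian spectral radius of `G`: the largest eigenvalue of
`Q(G) = D(G) + A(G)` -/
noncomputable def qSpectralRadius {n : ℕ} (G : SimpleGraph (Fin n)) : ℝ :=
  letI := Classical.decRel G.Adj
  ⨆ i, (signlessLap_isHermitian G).eigenvalues i


section AbreuNikiforovProof

open Finset Matrix

lemma ms_alg (k s σ : ℝ) (hk : 1 ≤ k) (h0 : 0 ≤ σ) (hσ : σ ≤ s) :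
    (1 - 1/k) * σ^2 + 2*(s - σ)*σ ≤ (1 - 1/(k+1)) * s^2 := by
  have hk0 : (0:ℝ) < k := by linarith
  have hk1 : (0:ℝ) < k + 1 := by linarith
  have key : (1 - 1/(k+1)) * s^2 - ((1 - 1/k) * σ^2 + 2*(s - σ)*σ)
      = ((k+1)*σ - k*s)^2 / (k*(k+1)) := by
    field_simp
    ring
  have h2 : 0 ≤ ((k+1)*σ - k*s)^2 / (k*(k+1)) :=
    div_nonneg (sq_nonneg _) (by positivity)
  linarith [key ▸ h2]

lemma superadd (b x y k : ℝ) (hb : 0 ≤ b) (hx : 1 ≤ x) (hy : 0 ≤ y) (hk : 0 ≤ k)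
    (hky : y = 0 ∨ 1 ≤ k) :
    x/(b+x) + k*y/(k*b+y) ≤ (k+1)*(x+y)/((k+1)*b+(x+y)) := by
  have hbx : (0:ℝ) < b + x := by linarith
  rcases eq_or_lt_of_le hy with h0 | h0
  · rw [← h0]
    simp only [mul_zero, add_zero, zero_div]
    have h3 : (0:ℝ) < (k+1)*b + x := by nlinarith
    rw [div_le_div_iff₀ hbx h3]
    nlinarith [mul_nonneg hk (sq_nonneg x)]
  · have hk1 : 1 ≤ k := by
      rcases hky with h | h
      · exact absurd h (by linarith)
      · exact h
    have h2 : (0:ℝ) < k*b + y := by nlinarith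
    have h3 : (0:ℝ) < (k+1)*b + (x+y) := by nlinarith
    have key : (k+1)*(x+y)/((k+1)*b+(x+y)) - (x/(b+x) + k*y/(k*b+y))
        = b*(k*x-y)^2/((b+x)*(k*b+y)*((k+1)*b+(x+y))) := by
      field_simp
      ring
    have h4 : 0 ≤ b*(k*x-y)^2/((b+x)*(k*b+y)*((k+1)*b+(x+y))) := by positivity
    linarith [key ▸ h4]

lemma greedy {n : ℕ} (G : SimpleGraph (Fin n)) [DecidableRel G.Adj] (b : ℝ) (hb : 0 ≤ b) :
    ∀ (k : ℕ) (S : Finset (Fin n)),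
      (∀ T : Finset (Fin n), ↑T ⊆ (S : Set (Fin n)) → G.IsClique (↑T : Set (Fin n)) →
        T.card ≤ k) →
      ∑ v ∈ S, 1/(b + ((n:ℝ) - G.degree v)) ≤ (k:ℝ) * S.card / ((k:ℝ) * b + S.card) := by
  intro k
  induction k with
  | zero =>
    intro S hS
    have hSe : S = ∅ := by
      by_contra h
      obtain ⟨v, hv⟩ := Finset.nonempty_iff_ne_empty.2 h
      have h1 := hS {v} (by simpa using hv) (by simp [SimpleGraph.isClique_singleton])
      simp at h1
    subst hSe
    simp
  | succ k ih =>
    intro S hS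
    rcases S.eq_empty_or_nonempty with rfl | hne
    · simp
    obtain ⟨w, hw, hmax⟩ := S.exists_max_image (fun v => G.degree v) hne
    set A := S.filter (fun v => ¬ G.Adj w v) with hA
    set S' := S.filter (fun v => G.Adj w v) with hS'
    have hwA : w ∈ A := mem_filter.2 ⟨hw, G.irrefl⟩
    have hAcard : 1 ≤ A.card := card_pos.2 ⟨w, hwA⟩
    -- clique bound on S'
    have hS'k : ∀ T : Finset (Fin n), ↑T ⊆ (S' : Set (Fin n)) →
        G.IsClique (↑T : Set (Fin n)) → T.card ≤ k := by
      intro T hTsub hTcl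
      have hadj : ∀ t ∈ T, G.Adj w t := by
        intro t ht
        exact (mem_filter.1 (by exact_mod_cast hTsub ht)).2
      have hwT : w ∉ T := fun h => G.irrefl (hadj w h)
      have hins : G.IsClique (↑(insert w T) : Set (Fin n)) := by
        rw [coe_insert]
        exact hTcl.insert (fun t ht _ => hadj t ht)
      have hsub : ↑(insert w T) ⊆ (S : Set (Fin n)) := by
        rw [coe_insert]
        intro t ht
        rcases ht with rfl | ht
        · exact hw
        · exact filter_subset _ _ (by exact_mod_cast hTsub ht)
      have := hS _ hsub hins
      rw [card_insert_of_notMem hwT] at this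
      omega
    -- degree bound
    have hdeg : ∀ v ∈ S, (A.card : ℝ) ≤ (n:ℝ) - G.degree v := by
      intro v hv
      have h1 : G.degree v ≤ G.degree w := hmax v hv
      have hdisj : Disjoint (G.neighborFinset w) A := by
        rw [Finset.disjoint_left]
        intro u hu huA
        rw [SimpleGraph.mem_neighborFinset] at hu
        exact (mem_filter.1 huA).2 hu
      have h2 : G.degree w + A.card ≤ n := by
        have := card_le_card (subset_univ (G.neighborFinset w ∪ A))
        rw [card_union_of_disjoint hdisj, card_univ, Fintype.card_fin] at this
        have hdeq : G.degree w = (G.neighborFinset w).card := rfl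
        omega
      have : (G.degree v : ℝ) + A.card ≤ n := by
        push_cast
        have : G.degree v + A.card ≤ n := by omega
        exact_mod_cast this
      linarith
    -- sum over A
    have hApos : (0:ℝ) < b + A.card := by
      have : (1:ℝ) ≤ (A.card:ℝ) := by exact_mod_cast hAcard
      linarith
    have hsumA : ∑ v ∈ A, 1/(b + ((n:ℝ) - G.degree v)) ≤ (A.card:ℝ) / (b + A.card) := by
      have hbd : ∀ v ∈ A, 1/(b + ((n:ℝ) - G.degree v)) ≤ 1/(b + A.card) := by
        intro v hv
        apply one_div_le_one_div_of_le hApos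
        have := hdeg v (filter_subset _ _ hv)
        linarith
      calc ∑ v ∈ A, 1/(b + ((n:ℝ) - G.degree v)) ≤ A.card • (1/(b + (A.card:ℝ))) :=
            Finset.sum_le_card_nsmul _ _ _ hbd
        _ = (A.card:ℝ) / (b + A.card) := by
            rw [nsmul_eq_mul]; ring
    have hIH := ih S' hS'k
    have hky : (S'.card:ℝ) = 0 ∨ 1 ≤ (k:ℝ) := by
      rcases S'.eq_empty_or_nonempty with h | ⟨v, hv⟩
      · left; rw [h]; simp
      · right
        have := hS'k {v} (by simpa using hv) (by simp [SimpleGraph.isClique_singleton])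
        simp at this
        exact_mod_cast this
    have hsup := superadd b A.card S'.card k hb (by exact_mod_cast hAcard)
      (by positivity) (by positivity) hky
    have hcards : (A.card:ℝ) + S'.card = S.card := by
      have h2 : S'.card + A.card = S.card := by
        rw [hS', hA]
        exact Finset.card_filter_add_card_filter_not _
      push_cast [← h2]
      ring
    have hsplit : ∑ v ∈ S, 1/(b + ((n:ℝ) - G.degree v))
        = ∑ v ∈ S', 1/(b + ((n:ℝ) - G.degree v)) + ∑ v ∈ A, 1/(b + ((n:ℝ) - G.degree v)) := by
      rw [hS', hA]
      exact (Finset.sum_filter_add_sum_filter_not S _ _).symm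
    rw [hsplit]
    push_cast
    calc ∑ v ∈ S', 1/(b + ((n:ℝ) - G.degree v)) + ∑ v ∈ A, 1/(b + ((n:ℝ) - G.degree v))
        ≤ (k:ℝ) * S'.card / ((k:ℝ) * b + S'.card) + (A.card:ℝ) / (b + A.card) := by
          push_cast at hIH ⊢; linarith
      _ ≤ ((k:ℝ)+1) * ((A.card:ℝ) + S'.card) / (((k:ℝ)+1) * b + ((A.card:ℝ) + S'.card)) := by
          linarith [hsup]
      _ = ((k:ℝ)+1) * S.card / (((k:ℝ)+1) * b + S.card) := by rw [hcards]

lemma ms {n : ℕ} (G : SimpleGraph (Fin n)) [DecidableRel G.Adj] (y : Fin n → ℝ)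
    (hy : ∀ v, 0 ≤ y v) :
    ∀ (k : ℕ) (S : Finset (Fin n)),
      (∀ T : Finset (Fin n), ↑T ⊆ (S : Set (Fin n)) → G.IsClique (↑T : Set (Fin n)) →
        T.card ≤ k) →
      ∑ v ∈ S, ∑ u ∈ S, (if G.Adj v u then y v * y u else 0)
        ≤ (1 - 1/(k:ℝ)) * (∑ v ∈ S, y v)^2 := by
  have hF : ∀ v u : Fin n, 0 ≤ (if G.Adj v u then y v * y u else 0) := by
    intro v u
    split
    · exact mul_nonneg (hy v) (hy u)
    · exact le_refl _
  intro k
  induction k with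
  | zero =>
    intro S hS
    have hSe : S = ∅ := by
      by_contra h
      obtain ⟨v, hv⟩ := Finset.nonempty_iff_ne_empty.2 h
      have h1 := hS {v} (by simpa using hv) (by simp [SimpleGraph.isClique_singleton])
      simp at h1
    subst hSe
    simp
  | succ k ih =>
    intro S hS
    rcases S.eq_empty_or_nonempty with rfl | hne
    · simp
    set W : Fin n → ℝ := fun v => ∑ u ∈ S, (if G.Adj v u then y u else 0) with hW
    obtain ⟨w, hw, hmax⟩ := S.exists_max_image W hne
    set A := S.filter (fun v => ¬ G.Adj w v) with hA
    set S' := S.filter (fun v => G.Adj w v) with hS'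
    -- clique bound on S'
    have hS'k : ∀ T : Finset (Fin n), ↑T ⊆ (S' : Set (Fin n)) →
        G.IsClique (↑T : Set (Fin n)) → T.card ≤ k := by
      intro T hTsub hTcl
      have hadj : ∀ t ∈ T, G.Adj w t := by
        intro t ht
        exact (mem_filter.1 (by exact_mod_cast hTsub ht)).2
      have hwT : w ∉ T := fun h => G.irrefl (hadj w h)
      have hins : G.IsClique (↑(insert w T) : Set (Fin n)) := by
        rw [coe_insert]
        exact hTcl.insert (fun t ht _ => hadj t ht)
      have hsub : ↑(insert w T) ⊆ (S : Set (Fin n)) := by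
        rw [coe_insert]
        intro t ht
        rcases ht with rfl | ht
        · exact hw
        · exact filter_subset _ _ (by exact_mod_cast hTsub ht)
      have := hS _ hsub hins
      rw [card_insert_of_notMem hwT] at this
      omega
    set σ := ∑ v ∈ S', y v with hσdef
    set s := ∑ v ∈ S, y v with hsdef
    have hσ0 : 0 ≤ σ := Finset.sum_nonneg fun v _ => hy v
    have hs0 : 0 ≤ s := Finset.sum_nonneg fun v _ => hy v
    have hAσ : (∑ v ∈ A, y v) = s - σ := by
      have := Finset.sum_filter_add_sum_filter_not S (fun v => G.Adj w v) y
      rw [← hS', ← hA, ← hσdef] at this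
      rw [← hsdef] at this
      linarith
    have hWw : W w = σ := by
      rw [hW, hσdef, hS', Finset.sum_filter]
    -- row sums
    have hrow : ∀ v : Fin n, ∑ u ∈ S, (if G.Adj v u then y v * y u else 0) = y v * W v := by
      intro v
      rw [hW, Finset.mul_sum]
      apply Finset.sum_congr rfl
      intro u _
      split <;> ring
    have hcol : ∀ u : Fin n, ∑ v ∈ S, (if G.Adj v u then y v * y u else 0) = y u * W u := by
      intro u
      rw [hW, Finset.mul_sum]
      apply Finset.sum_congr rfl
      intro v _
      by_cases h : G.Adj u v
      · rw [if_pos h.symm, if_pos h]; ring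
      · rw [if_neg (fun hh => h hh.symm), if_neg h]; ring
    -- A-rows bound
    have hArows : ∑ v ∈ A, ∑ u ∈ S, (if G.Adj v u then y v * y u else 0) ≤ (s - σ) * σ := by
      rw [← hAσ, Finset.sum_mul]
      apply Finset.sum_le_sum
      intro v hv
      rw [hrow v]
      exact mul_le_mul_of_nonneg_left (le_trans (hmax v (filter_subset _ _ hv)) (le_of_eq hWw)) (hy v)
    -- S' x A bound
    have hcross : ∑ v ∈ S', ∑ u ∈ A, (if G.Adj v u then y v * y u else 0) ≤ (s - σ) * σ := by
      have h1 : ∑ v ∈ S', ∑ u ∈ A, (if G.Adj v u then y v * y u else 0)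
          ≤ ∑ v ∈ S, ∑ u ∈ A, (if G.Adj v u then y v * y u else 0) := by
        apply Finset.sum_le_sum_of_subset_of_nonneg (filter_subset _ _)
        intro v _ _
        exact Finset.sum_nonneg fun u _ => hF v u
      have h2 : ∑ v ∈ S, ∑ u ∈ A, (if G.Adj v u then y v * y u else 0)
          = ∑ u ∈ A, y u * W u := by
        rw [Finset.sum_comm]
        exact Finset.sum_congr rfl fun u _ => hcol u
      have h3 : ∑ u ∈ A, y u * W u ≤ (s - σ) * σ := by
        rw [← hAσ, Finset.sum_mul]
        apply Finset.sum_le_sum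
        intro u hu
        exact mul_le_mul_of_nonneg_left (le_trans (hmax u (filter_subset _ _ hu)) (le_of_eq hWw)) (hy u)
      linarith
    -- IH
    have hIH := ih S' hS'k
    -- split outer sum
    have hsplit : ∑ v ∈ S, ∑ u ∈ S, (if G.Adj v u then y v * y u else 0)
        = ∑ v ∈ S', ∑ u ∈ S, (if G.Adj v u then y v * y u else 0)
          + ∑ v ∈ A, ∑ u ∈ S, (if G.Adj v u then y v * y u else 0) := by
      rw [hS', hA]
      exact (Finset.sum_filter_add_sum_filter_not S _ _).symm
    have hsplitin : ∀ v : Fin n, ∑ u ∈ S, (if G.Adj v u then y v * y u else 0)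
        = ∑ u ∈ S', (if G.Adj v u then y v * y u else 0)
          + ∑ u ∈ A, (if G.Adj v u then y v * y u else 0) := by
      intro v
      rw [hS', hA]
      exact (Finset.sum_filter_add_sum_filter_not S _ _).symm
    have hσs : σ ≤ s := by
      rw [hσdef, hsdef, hS']
      exact Finset.sum_le_sum_of_subset_of_nonneg (filter_subset _ _) fun v _ _ => hy v
    have htot : ∑ v ∈ S, ∑ u ∈ S, (if G.Adj v u then y v * y u else 0)
        ≤ (1 - 1/(k:ℝ)) * σ^2 + 2*(s - σ)*σ := by
      rw [hsplit]
      have e1 : ∑ v ∈ S', ∑ u ∈ S, (if G.Adj v u then y v * y u else 0)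
          = ∑ v ∈ S', ∑ u ∈ S', (if G.Adj v u then y v * y u else 0)
            + ∑ v ∈ S', ∑ u ∈ A, (if G.Adj v u then y v * y u else 0) := by
        rw [← Finset.sum_add_distrib]
        exact Finset.sum_congr rfl fun v _ => hsplitin v
      rw [e1]
      have := hIH
      rw [← hσdef] at this
      nlinarith [hArows, hcross, this]
    -- final algebra
    rcases Nat.eq_zero_or_pos k with rfl | hk1
    · -- k = 0 : S' empty, σ = 0
      have hS'e : S' = ∅ := by
        by_contra h
        obtain ⟨v, hv⟩ := Finset.nonempty_iff_ne_empty.2 h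
        have h1 := hS'k {v} (by simpa using hv) (by simp [SimpleGraph.isClique_singleton])
        simp at h1
      have hσe : σ = 0 := by rw [hσdef, hS'e]; simp
      rw [hσe] at htot
      push_cast
      norm_num at htot ⊢
      nlinarith [htot]
    · have hkr : (1:ℝ) ≤ (k:ℝ) := by exact_mod_cast hk1
      have := ms_alg (k:ℝ) s σ hkr hσ0 hσs
      push_cast
      linarith [htot, this]

lemma noclique {n r : ℕ} (G : SimpleGraph (Fin n))
    (hfree : ¬ HasSubgraphCopy (SimpleGraph.completeGraph (Fin (r + 1))) G) :
    ∀ T : Finset (Fin n), G.IsClique (↑T : Set (Fin n)) → T.card ≤ r := by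
  intro T hT
  by_contra h
  push_neg at h
  obtain ⟨T', hT'sub, hT'card⟩ := Finset.exists_subset_card_eq (show r+1 ≤ T.card by omega)
  have hclT' : G.IsClique (↑T' : Set (Fin n)) := hT.subset (by exact_mod_cast coe_subset.2 hT'sub)
  have e : Fin (r+1) ≃ {x // x ∈ T'} := (finCongr hT'card.symm).trans T'.equivFin.symm
  apply hfree
  refine ⟨⟨fun i => (e i : Fin n), ?_⟩, ?_⟩
  · intro a b hab
    have hne : (e a : Fin n) ≠ (e b : Fin n) := by
      intro hEq
      exact hab (e.injective (Subtype.ext hEq))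
    exact hclT' (e a).2 (e b).2 hne
  · intro a b hEq
    exact e.injective (Subtype.ext hEq)

lemma core {n r : ℕ} (hr : 2 ≤ r) (hn : 1 ≤ n) (G : SimpleGraph (Fin n)) [DecidableRel G.Adj]
    (hcl : ∀ T : Finset (Fin n), G.IsClique (↑T : Set (Fin n)) → T.card ≤ r)
    (y : Fin n → ℝ) (hy : ∀ v, 0 ≤ y v) :
    ∑ v, ∑ u, y v * ((Matrix.diagonal (fun v => (G.degree v : ℝ)) + G.adjMatrix ℝ) v u * y u)
      ≤ 2*(1 - 1/(r:ℝ))*(n:ℝ) * ∑ v, (y v)^2 := by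
  have hr1 : (2:ℝ) ≤ (r:ℝ) := by exact_mod_cast hr
  have hrpos : (0:ℝ) < (r:ℝ) := by linarith
  have hn1 : (1:ℝ) ≤ (n:ℝ) := by exact_mod_cast hn
  set c : ℝ := 1 - 1/(r:ℝ) with hc
  have hcpos : (0:ℝ) < c := by
    rw [hc]
    have : 1/(r:ℝ) ≤ 1/2 := by
      apply one_div_le_one_div_of_le <;> linarith
    linarith
  -- expansion
  have expand : ∑ v, ∑ u, y v *
        ((Matrix.diagonal (fun v => (G.degree v : ℝ)) + G.adjMatrix ℝ) v u * y u)
      = (∑ v, (G.degree v : ℝ) * (y v)^2)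
        + ∑ v, ∑ u, (if G.Adj v u then y v * y u else 0) := by
    rw [← Finset.sum_add_distrib]
    apply Finset.sum_congr rfl
    intro v _
    have hterm : ∀ u : Fin n, y v *
          ((Matrix.diagonal (fun v => (G.degree v : ℝ)) + G.adjMatrix ℝ) v u * y u)
        = (if v = u then (G.degree v : ℝ) * (y v * y u) else 0)
          + (if G.Adj v u then y v * y u else 0) := by
      intro u
      rw [Matrix.add_apply, Matrix.diagonal_apply, SimpleGraph.adjMatrix_apply]
      split <;> split <;> ring
    rw [Finset.sum_congr rfl (fun u _ => hterm u), Finset.sum_add_distrib]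
    congr 1
    rw [Finset.sum_ite_eq univ v (fun u => (G.degree v : ℝ) * (y v * y u)),
      if_pos (mem_univ v)]
    ring
  -- MS bound
  have hP := ms G y hy r univ (fun T _ hT => hcl T hT)
  -- D positive
  set D : Fin n → ℝ := fun v => 2*c*(n:ℝ) - (G.degree v : ℝ) with hD
  have hDpos : ∀ v, 0 < D v := by
    intro v
    have h1 : (G.degree v : ℝ) < (n:ℝ) := by
      have := G.degree_lt_card_verts v
      rw [Fintype.card_fin] at this
      exact_mod_cast this
    have h2 : (n:ℝ) ≤ 2*c*(n:ℝ) := by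
      have : (1:ℝ) ≤ 2*c := by
        rw [hc]
        have : 1/(r:ℝ) ≤ 1/2 := by
          apply one_div_le_one_div_of_le <;> linarith
        linarith
      nlinarith
    rw [hD]
    dsimp only
    linarith
  -- Cauchy-Schwarz
  have hCS := Finset.sum_mul_sq_le_sq_mul_sq univ
    (fun v => y v * Real.sqrt (D v)) (fun v => 1/Real.sqrt (D v))
  have hCS1 : ∀ v : Fin n, (y v * Real.sqrt (D v)) * (1/Real.sqrt (D v)) = y v := by
    intro v
    have := Real.sqrt_pos.2 (hDpos v)
    field_simp
  have hCS2 : ∀ v : Fin n, (y v * Real.sqrt (D v))^2 = (y v)^2 * D v := by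
    intro v
    rw [mul_pow, Real.sq_sqrt (hDpos v).le]
  have hCS3 : ∀ v : Fin n, (1/Real.sqrt (D v))^2 = 1/(D v) := by
    intro v
    rw [div_pow, one_pow, Real.sq_sqrt (hDpos v).le]
  rw [Finset.sum_congr rfl (fun v _ => hCS1 v), Finset.sum_congr rfl (fun v _ => hCS2 v),
    Finset.sum_congr rfl (fun v _ => hCS3 v)] at hCS
  -- greedy bound
  have hbnn : (0:ℝ) ≤ (1 - 2/(r:ℝ))*(n:ℝ) := by
    have : 2/(r:ℝ) ≤ 1 := by
      rw [div_le_one hrpos]; linarith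
    nlinarith
  have hgr := greedy G ((1 - 2/(r:ℝ))*(n:ℝ)) hbnn r univ (fun T _ hT => hcl T hT)
  have hgr1 : ∑ v, 1/(D v) ≤ (r:ℝ)/((r:ℝ)-1) := by
    have he : ∀ v : Fin n, (1 - 2/(r:ℝ))*(n:ℝ) + ((n:ℝ) - G.degree v) = D v := by
      intro v
      rw [hD, hc]
      dsimp only
      field_simp
      ring
    have hcard : ((univ : Finset (Fin n)).card : ℝ) = (n:ℝ) := by
      rw [card_univ, Fintype.card_fin]
    have hLHS : ∑ v, 1/(D v)
        = ∑ v, 1/((1 - 2/(r:ℝ))*(n:ℝ) + ((n:ℝ) - G.degree v)) := by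
      apply Finset.sum_congr rfl
      intro v _
      rw [he v]
    have hden : (r:ℝ) * ((1 - 2/(r:ℝ))*(n:ℝ)) + (n:ℝ) = ((r:ℝ)-1) * (n:ℝ) := by
      field_simp
      ring
    have hne0 : (n:ℝ) ≠ 0 := by linarith
    have hr1ne : (r:ℝ) - 1 ≠ 0 := by
      intro h; nlinarith
    calc ∑ v, 1/(D v)
        = ∑ v, 1/((1 - 2/(r:ℝ))*(n:ℝ) + ((n:ℝ) - G.degree v)) := hLHS
      _ ≤ (r:ℝ) * ((univ : Finset (Fin n)).card) / ((r:ℝ) * ((1 - 2/(r:ℝ))*(n:ℝ)) + ((univ : Finset (Fin n)).card)) := hgr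
      _ = (r:ℝ) * (n:ℝ) / (((r:ℝ)-1) * (n:ℝ)) := by rw [hcard, hden]
      _ = (r:ℝ)/((r:ℝ)-1) := by
          rw [mul_div_mul_comm, div_self hne0, mul_one]
  -- combine
  have hsumD_nn : (0:ℝ) ≤ ∑ v, (y v)^2 * D v :=
    Finset.sum_nonneg fun v _ => mul_nonneg (sq_nonneg _) (hDpos v).le
  have hs2 : (∑ v, y v)^2 ≤ (∑ v, (y v)^2 * D v) * ((r:ℝ)/((r:ℝ)-1)) :=
    le_trans hCS (mul_le_mul_of_nonneg_left hgr1 hsumD_nn)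
  have hr1ne : (r:ℝ) - 1 ≠ 0 := by intro h; nlinarith
  have hcc : c * ((r:ℝ)/((r:ℝ)-1)) = 1 := by
    rw [hc]
    field_simp
  have hcs2 : c * (∑ v, y v)^2 ≤ ∑ v, (y v)^2 * D v := by
    calc c * (∑ v, y v)^2 ≤ c * ((∑ v, (y v)^2 * D v) * ((r:ℝ)/((r:ℝ)-1))) :=
          mul_le_mul_of_nonneg_left hs2 hcpos.le
      _ = (c * ((r:ℝ)/((r:ℝ)-1))) * (∑ v, (y v)^2 * D v) := by ring
      _ = ∑ v, (y v)^2 * D v := by rw [hcc, one_mul]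
  have hSD : ∑ v, (y v)^2 * D v
      = 2*c*(n:ℝ) * (∑ v, (y v)^2) - ∑ v, (G.degree v:ℝ) * (y v)^2 := by
    rw [Finset.mul_sum, ← Finset.sum_sub_distrib]
    apply Finset.sum_congr rfl
    intro v _
    rw [hD]
    dsimp only
    ring
  rw [expand]
  rw [← hc] at hP
  nlinarith [hP, hcs2, hSD]

/-- **Abreu–Nikiforov theorem.** For `r ≥ 2`, if `G` is an `n`-vertex graph with
no copy of `K_{r+1}`, then `q(G) ≤ 2(1 − 1/r)·n`. -/
theorem abreu_nikiforov (n r : ℕ) (hr : 2 ≤ r) (G : SimpleGraph (Fin n))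
    (hfree : ¬ HasSubgraphCopy (SimpleGraph.completeGraph (Fin (r + 1))) G) :
    qSpectralRadius G ≤ 2 * (1 - 1 / (r : ℝ)) * n := by
  letI := Classical.decRel G.Adj
  unfold qSpectralRadius
  rcases Nat.eq_zero_or_pos n with rfl | hn
  · rw [Real.iSup_of_isEmpty]
    norm_num
  · haveI : Nonempty (Fin n) := Fin.pos_iff_nonempty.mp hn
    apply ciSup_le
    intro i
    set Q := Matrix.diagonal (fun v => (G.degree v : ℝ)) + G.adjMatrix ℝ with hQdef
    have hQ := signlessLap_isHermitian G
    set x : Fin n → ℝ := ⇑(hQ.eigenvectorBasis i) with hxdef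
    have heig : Q *ᵥ x = hQ.eigenvalues i • x := hQ.mulVec_eigenvectorBasis i
    -- norm 1
    have hnorm1 : ‖hQ.eigenvectorBasis i‖ = 1 := hQ.eigenvectorBasis.orthonormal.1 i
    have hnorm : ∑ v, (x v)^2 = 1 := by
      have h1 : Real.sqrt (∑ v, ‖(hQ.eigenvectorBasis i) v‖^2) = 1 := by
        rw [← EuclideanSpace.norm_eq]
        exact hnorm1
      have h2 := Real.sqrt_eq_one.mp h1
      rw [← h2]
      apply Finset.sum_congr rfl
      intro v _
      rw [Real.norm_eq_abs, sq_abs]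
    -- eigenvalue as quadratic form
    have hquad : hQ.eigenvalues i = ∑ v, ∑ u, x v * (Q v u * x u) := by
      have h1 : ∑ v, x v * ((Q *ᵥ x) v) = hQ.eigenvalues i := by
        rw [heig]
        have : ∀ v : Fin n, x v * ((hQ.eigenvalues i • x) v)
            = hQ.eigenvalues i * (x v)^2 := by
          intro v
          rw [Pi.smul_apply, smul_eq_mul]
          ring
        rw [Finset.sum_congr rfl (fun v _ => this v), ← Finset.mul_sum, hnorm, mul_one]
      rw [← h1]
      apply Finset.sum_congr rfl
      intro v _
      rw [Matrix.mulVec, dotProduct, Finset.mul_sum]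
    -- Q entries nonneg
    have hQnn : ∀ v u, 0 ≤ Q v u := by
      intro v u
      rw [hQdef, Matrix.add_apply, Matrix.diagonal_apply, SimpleGraph.adjMatrix_apply]
      split_ifs <;> positivity
    -- bound by abs values
    have habs : ∑ v, ∑ u, x v * (Q v u * x u)
        ≤ ∑ v, ∑ u, |x v| * (Q v u * |x u|) := by
      apply Finset.sum_le_sum
      intro v _
      apply Finset.sum_le_sum
      intro u _
      calc x v * (Q v u * x u) ≤ |x v * (Q v u * x u)| := le_abs_self _
        _ = |x v| * (Q v u * |x u|) := by
            rw [abs_mul, abs_mul, abs_of_nonneg (hQnn v u)]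
    have hcore := core hr hn G (noclique G hfree) (fun v => |x v|) (fun v => abs_nonneg _)
    have habs2 : ∑ v, (|x v|)^2 = 1 := by
      rw [← hnorm]
      exact Finset.sum_congr rfl fun v _ => sq_abs _
    rw [hquad]
    calc ∑ v, ∑ u, x v * (Q v u * x u) ≤ ∑ v, ∑ u, |x v| * (Q v u * |x u|) := habs
      _ ≤ 2*(1 - 1/(r:ℝ))*(n:ℝ) * ∑ v, (|x v|)^2 := hcore
      _ = 2*(1 - 1/(r:ℝ))*(n:ℝ) := by rw [habs2, mul_one]

end AbreuNikiforovProof
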